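/- Let μ, δ, q > 0 with 2μ > qδ². Then ∫_{log(q)/δ}^{∞} e^{-(2μ/(qδ) - δ)x}(1 - q e^{-δx})² dx = (2 q^{1 - 2μ/(qδ²)} / δ) · Γ(2μ/(qδ²) - 1) / Γ(2μ/(qδ²) + 2). -/

import Mathlib

open Real MeasureTheory

lemma integral_exp_neg_mul_Ioi {b : ℝ} (hb : 0 < b) (a : ℝ) :
    ∫ x in Set.Ioi a, Real.exp (-b * x) = Real.exp (-b * a) / b := by
  have hderiv : ∀ x ∈ Set.Ici a,
      HasDerivAt (fun x => -Real.exp (-b * x) / b) (Real.exp (-b * x)) x := by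
    intro x _
    have h := (((hasDerivAt_id x).const_mul (-b)).exp).neg.div_const b
    refine h.congr_deriv ?_
    field_simp
    rfl
  have htend : Filter.Tendsto (fun x => -Real.exp (-b * x) / b) Filter.atTop (nhds 0) := by
    have h : Filter.Tendsto (fun x : ℝ => Real.exp (-b * x)) Filter.atTop (nhds 0) :=
      Real.tendsto_exp_atBot.comp (Filter.tendsto_id.const_mul_atTop_of_neg (neg_neg_iff_pos.2 hb))
    simpa using (h.neg).div_const b
  have h := MeasureTheory.integral_Ioi_of_hasDerivAt_of_tendsto' hderiv
    (exp_neg_integrableOn_Ioi a hb) htend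
  rw [h]
  field_simp
  ring

theorem hulthen_ground_state_normalization (μ δ q : ℝ) (hμ : 0 < μ) (hδ : 0 < δ) (hq : 0 < q)
    (hcond : 2*μ > q*δ^2) :
    ∫ x in Set.Ioi (Real.log q / δ),
        Real.exp (-(2*μ/(q*δ) - δ) * x) * (1 - q * Real.exp (-δ*x))^2
      = (2 * q ^ ((1:ℝ) - 2*μ/(q*δ^2)) / δ) *
          (Real.Gamma (2*μ/(q*δ^2) - 1) / Real.Gamma (2*μ/(q*δ^2) + 2)) := by
  set s : ℝ := 2*μ/(q*δ^2) with hs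
  have hs1 : 1 < s := by
    rw [hs, lt_div_iff₀ (by positivity)]
    linarith
  have hsδ : 2*μ/(q*δ) = s*δ := by
    rw [hs]; field_simp
  clear_value s
  clear hs
  have h1 : 0 < δ*(s-1) := by nlinarith
  have h2 : 0 < δ*s := by nlinarith
  have h3 : 0 < δ*(s+1) := by nlinarith
  set c : ℝ := Real.log q / δ with hc
  have key : ∀ x : ℝ, Real.exp (-(2*μ/(q*δ) - δ) * x) * (1 - q * Real.exp (-δ*x))^2
      = Real.exp (-(δ*(s-1)) * x) - (2*q) * Real.exp (-(δ*s) * x)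
        + q^2 * Real.exp (-(δ*(s+1)) * x) := by
    intro x
    rw [hsδ]
    have e1 : Real.exp (-(δ*s)*x) = Real.exp (-(δ*(s-1))*x) * Real.exp (-δ*x) := by
      rw [← Real.exp_add]; ring_nf
    have e2 : Real.exp (-(δ*(s+1))*x)
        = Real.exp (-(δ*(s-1))*x) * (Real.exp (-δ*x))^2 := by
      rw [sq, ← Real.exp_add, ← Real.exp_add]; ring_nf
    have hA : -(s*δ-δ)*x = -(δ*(s-1))*x := by ring
    rw [hA, e1, e2]; ring
  have i1 : IntegrableOn (fun x => Real.exp (-(δ*(s-1)) * x)) (Set.Ioi c) :=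
    exp_neg_integrableOn_Ioi c h1
  have i2 : IntegrableOn (fun x => (2*q) * Real.exp (-(δ*s) * x)) (Set.Ioi c) :=
    (exp_neg_integrableOn_Ioi c h2).const_mul _
  have i3 : IntegrableOn (fun x => q^2 * Real.exp (-(δ*(s+1)) * x)) (Set.Ioi c) :=
    (exp_neg_integrableOn_Ioi c h3).const_mul _
  have E : ∀ t : ℝ, Real.exp (-(δ*t) * c) = q ^ (-t) := by
    intro t
    rw [Real.rpow_def_of_pos hq]
    congr 1
    rw [hc]
    field_simp
  calc ∫ x in Set.Ioi c,
        Real.exp (-(2*μ/(q*δ) - δ) * x) * (1 - q * Real.exp (-δ*x))^2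
      = ∫ x in Set.Ioi c,
        (Real.exp (-(δ*(s-1)) * x) - (2*q) * Real.exp (-(δ*s) * x)
          + q^2 * Real.exp (-(δ*(s+1)) * x)) := by
        exact MeasureTheory.integral_congr_ae (Filter.Eventually.of_forall fun x => key x)
    _ = q ^ (1-s) / (δ*(s-1)) - (2*q) * (q ^ (-s) / (δ*s))
          + q^2 * (q ^ (-(s+1)) / (δ*(s+1))) := by
        have i12 : IntegrableOn
            (fun x => Real.exp (-(δ*(s-1)) * x) - (2*q) * Real.exp (-(δ*s) * x))
            (Set.Ioi c) := i1.sub i2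
        rw [MeasureTheory.integral_add i12 i3, MeasureTheory.integral_sub i1 i2,
          MeasureTheory.integral_const_mul, MeasureTheory.integral_const_mul,
          integral_exp_neg_mul_Ioi h1 c, integral_exp_neg_mul_Ioi h2 c,
          integral_exp_neg_mul_Ioi h3 c, E (s-1), E s, E (s+1)]
        norm_num
    _ = (2 * q ^ ((1:ℝ) - s) / δ) * (Real.Gamma (s - 1) / Real.Gamma (s + 2)) := by
        have g1 : Real.Gamma (s+2) = (s+1) * Real.Gamma (s+1) := by
          rw [show (s+2) = (s+1)+1 by ring,
            Real.Gamma_add_one (ne_of_gt (by linarith : (0:ℝ) < s+1))]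
        have g2 : Real.Gamma (s+1) = s * Real.Gamma s :=
          Real.Gamma_add_one (ne_of_gt (by linarith : (0:ℝ) < s))
        have g3 : Real.Gamma s = (s-1) * Real.Gamma (s-1) := by
          have h := Real.Gamma_add_one (ne_of_gt (by linarith : (0:ℝ) < s-1))
          simpa using h
        have hGpos : 0 < Real.Gamma (s-1) := Real.Gamma_pos_of_pos (by linarith)
        have hq1 : q * q ^ (-s) = q ^ (1-s) := by
          nth_rewrite 1 [← Real.rpow_one q]
          rw [← Real.rpow_add hq]
          ring_nf
        have hq2 : q^2 * q ^ (-(s+1)) = q ^ (1-s) := by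
          rw [show (q:ℝ)^2 = q ^ (2:ℝ) by rw [← Real.rpow_natCast q 2]; norm_num,
            ← Real.rpow_add hq]
          ring_nf
        rw [g1, g2, g3]
        have h2q : (2*q) * (q ^ (-s) / (δ*s)) = 2 * q^(1-s) / (δ*s) := by
          rw [← hq1]; ring
        have h3q : q^2 * (q ^ (-(s+1)) / (δ*(s+1))) = q^(1-s) / (δ*(s+1)) := by
          rw [← hq2]; ring
        rw [h2q, h3q]
        have hQ : (0:ℝ) < q ^ (1-s) := Real.rpow_pos_of_pos hq _
        have hne1 : s - 1 ≠ 0 := by linarith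
        have hne2 : s ≠ 0 := by linarith
        have hne3 : s + 1 ≠ 0 := by linarith
        field_simp
        ring
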